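/- arXiv:1710.05133 — 4 statements merged into one kernel-verified Lean document; each statement's English description precedes it below -/
import Mathlib

section
/- Let A : ℝⁿ → ℝᵐ be a nonzero linear map, and let σ_min denote the smallest nonzero singular value of A. Fix a point b in the range of A and let S = {x ∈ ℝⁿ : A x = b}. Then for every x ∈ ℝⁿ, ‖A x − b‖ ≥ σ_min · dist(x, S), where dist(x, S) = inf_{y ∈ S} ‖x − y‖. -/
/-- For a nonzero linear map `A : ℝⁿ → ℝᵐ` with smallest nonzero singular
value `σmin`, a point `b` in the range of `A`, and `S = {x | A x = b}`, one has
`‖A x − b‖ ≥ σmin · dist(x, S)` for every `x`. -/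
theorem lower_bound_smallest_singular_value {n m : ℕ}
    (A : EuclideanSpace ℝ (Fin n) →L[ℝ] EuclideanSpace ℝ (Fin m)) (hA : A ≠ 0)
    (σmin : ℝ)
    (hσmin : σmin = sInf {c : ℝ | ∃ x : EuclideanSpace ℝ (Fin n),
      x ≠ 0 ∧ x ∈ (LinearMap.ker (A : EuclideanSpace ℝ (Fin n) →ₗ[ℝ] EuclideanSpace ℝ (Fin m)))ᗮ ∧ c = ‖A x‖ / ‖x‖})
    (b : EuclideanSpace ℝ (Fin m)) (hb : b ∈ Set.range A)
    (S : Set (EuclideanSpace ℝ (Fin n))) (hS : S = {x | A x = b}) :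
    ∀ x : EuclideanSpace ℝ (Fin n), σmin * Metric.infDist x S ≤ ‖A x - b‖ := by
  intro x
  obtain ⟨x0, hx0⟩ := hb
  set K : Submodule ℝ (EuclideanSpace ℝ (Fin n)) := LinearMap.ker (A : EuclideanSpace ℝ (Fin n) →ₗ[ℝ] EuclideanSpace ℝ (Fin m)) with hK
  set cset : Set ℝ := {c : ℝ | ∃ x : EuclideanSpace ℝ (Fin n),
      x ≠ 0 ∧ x ∈ Kᗮ ∧ c = ‖A x‖ / ‖x‖} with hcset
  have hbdd : BddBelow cset := by
    refine ⟨0, fun c hc => ?_⟩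
    obtain ⟨y, _, _, rfl⟩ := hc
    positivity
  -- nonemptiness
  have hne : cset.Nonempty := by
    obtain ⟨z, hz⟩ : ∃ z, A z ≠ 0 := by
      by_contra h
      push_neg at h
      exact hA (by ext w; simp [h w])
    set p : EuclideanSpace ℝ (Fin n) := z - (K.orthogonalProjection z : EuclideanSpace ℝ (Fin n)) with hp
    have hpK : p ∈ Kᗮ := Submodule.sub_starProjection_mem_orthogonal (K := K) z
    have hAp : A p = A z := by
      have : A ((K.orthogonalProjection z : EuclideanSpace ℝ (Fin n))) = 0 :=
        (K.orthogonalProjection z).2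
      rw [hp, map_sub, this, sub_zero]
    have hpne : p ≠ 0 := by
      intro h
      rw [h] at hAp
      simp at hAp
      exact hz hAp.symm
    exact ⟨_, ⟨p, hpne, hpK, rfl⟩⟩
  have hσ0 : 0 ≤ σmin := by
    rw [hσmin]
    refine le_csInf hne ?_
    rintro c ⟨y, _, _, rfl⟩
    positivity
  -- decompose x - x0
  set v : EuclideanSpace ℝ (Fin n) := x - x0 with hv
  set p : EuclideanSpace ℝ (Fin n) := v - (K.orthogonalProjection v : EuclideanSpace ℝ (Fin n)) with hp
  have hpK : p ∈ Kᗮ := Submodule.sub_starProjection_mem_orthogonal (K := K) v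
  have hAp : A p = A x - b := by
    have h1 : A ((K.orthogonalProjection v : EuclideanSpace ℝ (Fin n))) = 0 :=
      (K.orthogonalProjection v).2
    rw [hp, map_sub, h1, sub_zero, hv, map_sub, hx0]
  by_cases hp0 : p = 0
  · have hxS : x ∈ S := by
      rw [hS]
      have : A x - b = 0 := by rw [← hAp, hp0]; simp
      simpa [sub_eq_zero] using this
    rw [Metric.infDist_zero_of_mem hxS, mul_zero]
    exact norm_nonneg _
  · have hmem : ‖A p‖ / ‖p‖ ∈ cset := ⟨p, hp0, hpK, rfl⟩
    have hle : σmin ≤ ‖A p‖ / ‖p‖ := hσmin ▸ csInf_le hbdd hmem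
    have hpnorm : 0 < ‖p‖ := norm_pos_iff.mpr hp0
    have h1 : σmin * ‖p‖ ≤ ‖A p‖ := (le_div_iff₀ hpnorm).mp hle
    have hxpS : x - p ∈ S := by
      rw [hS]
      simp only [Set.mem_setOf_eq, map_sub, hAp]
      abel
    have h2 : Metric.infDist x S ≤ ‖p‖ := by
      have := Metric.infDist_le_dist_of_mem (x := x) hxpS
      simpa [dist_eq_norm] using this
    calc σmin * Metric.infDist x S ≤ σmin * ‖p‖ := by
          exact mul_le_mul_of_nonneg_left h2 hσ0
      _ ≤ ‖A p‖ := h1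
      _ = ‖A x - b‖ := by rw [hAp]
end

section
/- Let A : ℝⁿ → ℝᵐ be a nonzero linear map with smallest nonzero singular value σ_min. Let g : ℝᵐ → ℝ be differentiable and μ-strongly convex (μ > 0) with minimizer u*, and suppose u* lies in the range of A. Define f(x) = g(A x), f* = g(u*), and S = {x ∈ ℝⁿ : A x = u*}. Then S is exactly the set of minimizers of f, and for all x ∈ ℝⁿ, f(x) − f* ≥ (μ σ_min² / 2) · dist(x, S)² (the quadratic growth condition). -/
open RealInnerProductSpace

/-- If `g` is differentiable and `μ`-strongly convex with minimizer `u*` in the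
range of the nonzero linear map `A`, then `f(x) = g(A x)` has minimizer set
`S = {x | A x = u*}` and satisfies the quadratic growth condition
`f(x) − f* ≥ (μ σmin² / 2) dist(x, S)²`. -/
theorem quadratic_growth_of_strongly_convex_composition {n m : ℕ}
    (A : EuclideanSpace ℝ (Fin n) →L[ℝ] EuclideanSpace ℝ (Fin m)) (hA : A ≠ 0)
    (σmin : ℝ)
    (hσmin : σmin = sInf {c : ℝ | ∃ x : EuclideanSpace ℝ (Fin n),
      x ≠ 0 ∧ x ∈ (LinearMap.ker (A : EuclideanSpace ℝ (Fin n) →ₗ[ℝ] EuclideanSpace ℝ (Fin m)))ᗮ ∧ c = ‖A x‖ / ‖x‖})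
    (g : EuclideanSpace ℝ (Fin m) → ℝ) (hg : Differentiable ℝ g)
    (μ : ℝ) (hμ : 0 < μ)
    (hsc : ∀ y z : EuclideanSpace ℝ (Fin m),
      g z + ⟪gradient g z, y - z⟫ + μ / 2 * ‖y - z‖ ^ 2 ≤ g y)
    (ustar : EuclideanSpace ℝ (Fin m))
    (hustar : ∀ y : EuclideanSpace ℝ (Fin m), g ustar ≤ g y)
    (hrange : ustar ∈ Set.range A)
    (f : EuclideanSpace ℝ (Fin n) → ℝ) (hf : f = fun x => g (A x))
    (fstar : ℝ) (hfstar : fstar = g ustar)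
    (S : Set (EuclideanSpace ℝ (Fin n))) (hS : S = {x | A x = ustar}) :
    S = {x | ∀ y : EuclideanSpace ℝ (Fin n), f x ≤ f y} ∧
    ∀ x : EuclideanSpace ℝ (Fin n),
      μ * σmin ^ 2 / 2 * Metric.infDist x S ^ 2 ≤ f x - fstar := by
  -- gradient of g at ustar is zero
  have hgrad : gradient g ustar = 0 := by
    have hmin : IsLocalMin g ustar := Filter.Eventually.of_forall hustar
    have := hmin.fderiv_eq_zero
    simp [gradient, this]
  -- quadratic growth for g
  have hkey : ∀ u : EuclideanSpace ℝ (Fin m),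
      μ / 2 * ‖u - ustar‖ ^ 2 ≤ g u - g ustar := by
    intro u
    have := hsc u ustar
    rw [hgrad] at this
    simp at this
    linarith
  obtain ⟨x0, hx0⟩ := hrange
  -- S description
  have hSmin : S = {x | ∀ y : EuclideanSpace ℝ (Fin n), f x ≤ f y} := by
    ext x
    subst hf hS
    simp only [Set.mem_setOf_eq]
    constructor
    · intro hx y
      rw [hx]
      exact hustar _
    · intro hx
      have h1 : g (A x) ≤ g ustar := by simpa [hx0] using hx x0
      have h2 := hkey (A x)
      have h3 : ‖A x - ustar‖ ^ 2 ≤ 0 := by nlinarith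
      have h4 : ‖A x - ustar‖ = 0 := by nlinarith [norm_nonneg (A x - ustar), sq_nonneg ‖A x - ustar‖]
      exact sub_eq_zero.mp (norm_eq_zero.mp h4)

  refine ⟨hSmin, fun x => ?_⟩
  -- σmin ≥ 0 and σmin ≤ ‖A p‖/‖p‖ for each eligible p
  have hAker : LinearMap.ker (A : EuclideanSpace ℝ (Fin n) →ₗ[ℝ] EuclideanSpace ℝ (Fin m)) ≠ ⊤ := by
    intro h
    apply hA
    ext v
    have hv : A v = 0 := by simpa using (h ▸ Submodule.mem_top : v ∈ LinearMap.ker (A : EuclideanSpace ℝ (Fin n) →ₗ[ℝ] EuclideanSpace ℝ (Fin m)))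
    simp [hv]
  have hne : {c : ℝ | ∃ x : EuclideanSpace ℝ (Fin n),
      x ≠ 0 ∧ x ∈ (LinearMap.ker (A : EuclideanSpace ℝ (Fin n) →ₗ[ℝ] EuclideanSpace ℝ (Fin m)))ᗮ ∧ c = ‖A x‖ / ‖x‖}.Nonempty := by
    have : (LinearMap.ker (A : EuclideanSpace ℝ (Fin n) →ₗ[ℝ] EuclideanSpace ℝ (Fin m)) : Submodule ℝ (EuclideanSpace ℝ (Fin n)))ᗮ ≠ ⊥ := by
      intro h
      apply hAker
      have := Submodule.orthogonal_eq_bot_iff.mp h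
      exact this
    obtain ⟨p, hp, hp0⟩ := Submodule.exists_mem_ne_zero_of_ne_bot this
    exact ⟨‖A p‖ / ‖p‖, p, hp0, hp, rfl⟩
  have hbdd : BddBelow {c : ℝ | ∃ x : EuclideanSpace ℝ (Fin n),
      x ≠ 0 ∧ x ∈ (LinearMap.ker (A : EuclideanSpace ℝ (Fin n) →ₗ[ℝ] EuclideanSpace ℝ (Fin m)))ᗮ ∧ c = ‖A x‖ / ‖x‖} := by
    refine ⟨0, fun c hc => ?_⟩
    obtain ⟨p, _, _, rfl⟩ := hc
    positivity
  have hσnonneg : 0 ≤ σmin := by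
    rw [hσmin]
    apply le_csInf hne
    rintro c ⟨p, _, _, rfl⟩
    positivity
  have hσle : ∀ p : EuclideanSpace ℝ (Fin n), p ∈ (LinearMap.ker (A : EuclideanSpace ℝ (Fin n) →ₗ[ℝ] EuclideanSpace ℝ (Fin m)))ᗮ →
      σmin * ‖p‖ ≤ ‖A p‖ := by
    intro p hp
    rcases eq_or_ne p 0 with rfl | hp0
    · simp
    · have : σmin ≤ ‖A p‖ / ‖p‖ := by
        rw [hσmin]
        exact csInf_le hbdd ⟨p, hp0, hp, rfl⟩
      have hpn : 0 < ‖p‖ := norm_pos_iff.mpr hp0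
      calc σmin * ‖p‖ ≤ ‖A p‖ / ‖p‖ * ‖p‖ := by nlinarith
        _ = ‖A p‖ := by field_simp
  -- decompose x - x0
  obtain ⟨k, hk, p, hp, hkp⟩ :=
    (LinearMap.ker (A : EuclideanSpace ℝ (Fin n) →ₗ[ℝ] EuclideanSpace ℝ (Fin m))).exists_add_mem_mem_orthogonal (x - x0)
  -- x0 + k ∈ S
  have hmem : x0 + k ∈ S := by
    rw [hS]
    have : A k = 0 := hk
    simp [Set.mem_setOf_eq, map_add, this, hx0]
  have hdist : Metric.infDist x S ≤ ‖p‖ := by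
    refine (Metric.infDist_le_dist_of_mem (x := x) hmem).trans_eq ?_
    rw [dist_eq_norm]
    congr 1
    have h : x - (x0 + k) = p := by
      linear_combination (norm := module) hkp
    rw [h]
  have hApp : A x - ustar = A p := by
    have : A (x - x0) = A k + A p := by rw [hkp, map_add]
    have hAk : A k = 0 := hk
    rw [map_sub, hx0] at this
    rw [this, hAk, zero_add]
  have hquad := hkey (A x)
  rw [hApp] at hquad
  have hAp : σmin * ‖p‖ ≤ ‖A p‖ := hσle p hp
  have hd0 : 0 ≤ Metric.infDist x S := Metric.infDist_nonneg
  have h1 : Metric.infDist x S ^ 2 ≤ ‖p‖ ^ 2 := by nlinarith [norm_nonneg p]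
  have h2 : σmin ^ 2 * ‖p‖ ^ 2 ≤ ‖A p‖ ^ 2 := by
    have := mul_le_mul hAp hAp (by positivity) (norm_nonneg (A p))
    nlinarith
  have hfx : f x - fstar = g (A x) - g ustar := by rw [hf, hfstar]
  rw [hfx]
  have s1 : μ * σmin ^ 2 / 2 * Metric.infDist x S ^ 2 ≤ μ * σmin ^ 2 / 2 * ‖p‖ ^ 2 :=
    mul_le_mul_of_nonneg_left h1 (by positivity)
  have s2 : μ * σmin ^ 2 / 2 * ‖p‖ ^ 2 = μ / 2 * (σmin ^ 2 * ‖p‖ ^ 2) := by ring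
  have s3 : μ / 2 * (σmin ^ 2 * ‖p‖ ^ 2) ≤ μ / 2 * ‖A p‖ ^ 2 :=
    mul_le_mul_of_nonneg_left h2 (by linarith)
  linarith
end

section
/- (Cumulative distance bound, Lemma 1 eq. (13), deterministic errors.) Let A : ℝⁿ → ℝᵐ be a nonzero linear map with smallest nonzero singular value σ_min and largest singular value σ_max, and set χ := σ_min/σ_max. For k = 1, …, K let f_k : ℝⁿ → ℝ be convex and differentiable with L-Lipschitz gradient, with set of minimizers X_k* = {x : A x = u_k*} for some u_k* in the range of A, with ∇f_k vanishing on X_k*, and satisfying quadratic growth f_k(x) − f_k* ≥ (μ/2) dist(x, X_k*)² with a common constant μ > 0. Fix ε_k ≥ 0, ν ≥ 0, α > 0 with αL(1+ν)² < 1; set ℓ² := 1 − μα(1 − αL(1+ν)²) + 2ναL, assume 0 < ℓ < χ, and ζ := α(1+αL)/ℓ. Let x_1 ∈ ℝⁿ and define x_{k+1} = x_k − α(∇f_k(x_k) + e_k) where ‖e_k‖ ≤ ε_k + ν‖∇f_k(x_k)‖. Choose any x_k* ∈ X_k* and set W_K := Σ_{k=2}^K ‖x_k* − x_{k−1}*‖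 and E_K := Σ_{k=1}^K ε_k. Then Σ_{k=1}^K dist(x_k, X_k*) ≤ (‖x_1 − x_1*‖ + W_K + ζ E_K) / (χ − ℓ). -/
set_option maxHeartbeats 1000000
open RealInnerProductSpace

section Aux
variable {F : Type*} [NormedAddCommGroup F] [InnerProductSpace ℝ F] [CompleteSpace F]



lemma hasDerivAt_line {f : F → ℝ} (hd : Differentiable ℝ f) (x v : F) (t : ℝ) :
    HasDerivAt (fun t : ℝ => f (x + t • v)) ⟪gradient f (x + t • v), v⟫ t := by
  have hc : HasDerivAt (fun t : ℝ => x + t • v) v t := by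
    simpa using ((hasDerivAt_id t).smul_const v).const_add x
  have hf := (hd (x + t • v)).hasGradientAt
  have h2 := hf.hasFDerivAt.comp_hasDerivAt t hc
  have h3 : HasDerivAt (fun t : ℝ => f (x + t • v))
      ((InnerProductSpace.toDual ℝ F) (gradient f (x + t • v)) v) t := h2
  simpa [InnerProductSpace.toDual_apply_apply] using h3

lemma convex_grad_ineq {f : F → ℝ} (hc : ConvexOn ℝ Set.univ f) (hd : Differentiable ℝ f)
    (x y : F) : f x + ⟪gradient f x, y - x⟫ ≤ f y := by
  set v := y - x with hv
  have hg : ConvexOn ℝ Set.univ (fun t : ℝ => f (x + t • v)) := by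
    have := hc.comp_affineMap (AffineMap.lineMap x y : ℝ →ᵃ[ℝ] F)
    have heq : (f ∘ (AffineMap.lineMap x y : ℝ →ᵃ[ℝ] F)) = fun t : ℝ => f (x + t • v) := by
      funext t; simp [AffineMap.lineMap_apply, hv, add_comm]
    rw [heq] at this
    simpa using this
  have hslope := hg.le_slope_of_hasDerivAt (Set.mem_univ (0:ℝ)) (Set.mem_univ (1:ℝ))
    one_pos (by simpa using hasDerivAt_line hd x v 0)
  have : slope (fun t : ℝ => f (x + t • v)) 0 1 = f y - f x := by
    simp [slope, hv]
  rw [this] at hslope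
  have hgx : ⟪gradient f x, v⟫ = (fderiv ℝ f x) v := by
    simp [gradient, InnerProductSpace.toDual_symm_apply]
  linarith



lemma descent_lemma {f : F → ℝ} (hd : Differentiable ℝ f) {L : ℝ} (hL : 0 < L)
    (hLip : ∀ u v : F, ‖gradient f u - gradient f v‖ ≤ L * ‖u - v‖) (x y : F) :
    f y ≤ f x + ⟪gradient f x, y - x⟫ + L / 2 * ‖y - x‖ ^ 2 := by
  set v := y - x with hv
  set ψ : ℝ → ℝ := fun t => f (x + t • v) - t * ⟪gradient f x, v⟫ - L * ‖v‖ ^ 2 / 2 * t ^ 2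
    with hψ
  have hder : ∀ t : ℝ, HasDerivAt ψ
      (⟪gradient f (x + t • v) - gradient f x, v⟫ - L * ‖v‖ ^ 2 * t) t := by
    intro t
    have h1 := (hasDerivAt_line hd x v t).sub ((hasDerivAt_id t).mul_const ⟪gradient f x, v⟫)
    have h2 := h1.sub ((hasDerivAt_pow 2 t).const_mul (L * ‖v‖ ^ 2 / 2))
    exact h2.congr_deriv (by rw [inner_sub_left]; ring)
  have hanti : AntitoneOn ψ (Set.Icc 0 1) := by
    apply antitoneOn_of_deriv_nonpos (convex_Icc 0 1)
    · intro t _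
      exact ((hder t).differentiableAt.continuousAt).continuousWithinAt
    · intro t ht
      exact (hder t).differentiableAt.differentiableWithinAt
    · intro t ht
      rw [interior_Icc] at ht
      rw [(hder t).deriv]
      have hb : ⟪gradient f (x + t • v) - gradient f x, v⟫ ≤ L * t * ‖v‖ ^ 2 := by
        calc ⟪gradient f (x + t • v) - gradient f x, v⟫
            ≤ ‖gradient f (x + t • v) - gradient f x‖ * ‖v‖ := real_inner_le_norm _ _
          _ ≤ (L * ‖(x + t • v) - x‖) * ‖v‖ := by
              apply mul_le_mul_of_nonneg_right (hLip _ _) (norm_nonneg _)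
          _ = L * t * ‖v‖ ^ 2 := by
              rw [add_sub_cancel_left, norm_smul, Real.norm_eq_abs,
                abs_of_pos ht.1]; ring
      nlinarith [ht.1.le]
  have := hanti (Set.mem_Icc.mpr ⟨le_refl 0, zero_le_one⟩)
    (Set.mem_Icc.mpr ⟨zero_le_one, le_refl 1⟩) zero_le_one
  simp only [hψ, zero_smul, add_zero, one_smul, zero_mul, mul_zero, sub_zero, one_pow,
    mul_one, zero_pow] at this
  have hxy : x + v = y := by rw [hv]; abel
  rw [hxy] at this
  linarith



lemma interp_lemma {f : F → ℝ} (hc : ConvexOn ℝ Set.univ f) (hd : Differentiable ℝ f)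
    {L : ℝ} (hL : 0 < L)
    (hLip : ∀ u v : F, ‖gradient f u - gradient f v‖ ≤ L * ‖u - v‖) (x y : F) :
    f x + ⟪gradient f x, y - x⟫ + 1 / (2 * L) * ‖gradient f y - gradient f x‖ ^ 2 ≤ f y := by
  set Δ := gradient f y - gradient f x with hΔ
  set z := y - (1 / L) • Δ with hz
  have h1 := descent_lemma hd hL hLip y z
  have h2 := convex_grad_ineq hc hd x z
  have hzy : z - y = -((1 / L) • Δ) := by rw [hz]; abel
  have e1 : ⟪gradient f y, z - y⟫ = -(1 / L) * ⟪gradient f y, Δ⟫ := by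
    rw [hzy, inner_neg_right, real_inner_smul_right]; ring
  have e2 : ‖z - y‖ ^ 2 = (1 / L) ^ 2 * ‖Δ‖ ^ 2 := by
    rw [hzy, norm_neg, norm_smul, mul_pow, Real.norm_eq_abs, sq_abs]
  have e3 : ⟪gradient f x, z - x⟫ = ⟪gradient f x, y - x⟫ - (1 / L) * ⟪gradient f x, Δ⟫ := by
    have : z - x = (y - x) - (1 / L) • Δ := by rw [hz]; abel
    rw [this, inner_sub_right, real_inner_smul_right]
  have e4 : ⟪gradient f y, Δ⟫ - ⟪gradient f x, Δ⟫ = ‖Δ‖ ^ 2 := by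
    rw [← inner_sub_left, ← hΔ, real_inner_self_eq_norm_sq]
  rw [e1, e2] at h1; rw [e3] at h2
  have hint1 : L / 2 * ((1 / L) ^ 2 * ‖Δ‖ ^ 2) = 1 / (2 * L) * ‖Δ‖ ^ 2 := by
    field_simp
  have hint2 : 1 / L * ⟪gradient f y, Δ⟫ - 1 / L * ⟪gradient f x, Δ⟫
      = 1 / L * ‖Δ‖ ^ 2 := by rw [← mul_sub, e4]
  have hint3 : 1 / L * ‖Δ‖ ^ 2 - 1 / (2 * L) * ‖Δ‖ ^ 2 = 1 / (2 * L) * ‖Δ‖ ^ 2 := by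
    field_simp; ring
  linarith

lemma cocoercive_at_min {f : F → ℝ} (hc : ConvexOn ℝ Set.univ f) (hd : Differentiable ℝ f)
    {L : ℝ} (hL : 0 < L)
    (hLip : ∀ u v : F, ‖gradient f u - gradient f v‖ ≤ L * ‖u - v‖) (x y : F)
    (hy : gradient f y = 0) :
    ‖gradient f x‖ ^ 2 / L ≤ ⟪gradient f x, x - y⟫ := by
  have h1 := interp_lemma hc hd hL hLip x y
  have h2 := interp_lemma hc hd hL hLip y x
  rw [hy] at h1 h2
  simp only [zero_sub, norm_neg, sub_zero, inner_zero_left] at h1 h2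
  have : ⟪gradient f x, y - x⟫ = -⟪gradient f x, x - y⟫ := by
    rw [← inner_neg_right]; congr 1; abel
  rw [this] at h1
  have h3 : 2 * (1 / (2 * L)) * ‖gradient f x‖ ^ 2 ≤ ⟪gradient f x, x - y⟫ := by linarith
  have h4 : ‖gradient f x‖ ^ 2 / L = 2 * (1 / (2 * L)) * ‖gradient f x‖ ^ 2 := by
    field_simp
  rw [h4]; exact h3

end Aux

section Geo


variable {n m : ℕ}
local notation "En" => EuclideanSpace ℝ (Fin n)
local notation "Em" => EuclideanSpace ℝ (Fin m)

lemma sigma_set_nonempty (A : En →L[ℝ] Em) (hA : A ≠ 0) :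
    {c : ℝ | ∃ x : En, x ≠ 0 ∧ x ∈ (LinearMap.ker (A : En →ₗ[ℝ] Em))ᗮ ∧ c = ‖A x‖ / ‖x‖}.Nonempty := by
  have hker : LinearMap.ker (A : En →ₗ[ℝ] Em) ≠ ⊤ := by
    intro h
    apply hA
    ext v i
    have : v ∈ LinearMap.ker (A : En →ₗ[ℝ] Em) := h ▸ Submodule.mem_top
    have hv : A v = 0 := by simpa using this
    simp [hv]
  have horth : (LinearMap.ker (A : En →ₗ[ℝ] Em))ᗮ ≠ ⊥ := fun h =>
    hker (Submodule.orthogonal_eq_bot_iff.mp h)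
  obtain ⟨x, hx, hx0⟩ := Submodule.ne_bot_iff _ |>.mp horth
  exact ⟨‖A x‖ / ‖x‖, x, hx0, hx, rfl⟩

lemma sigma_bddBelow (A : En →L[ℝ] Em) :
    BddBelow {c : ℝ | ∃ x : En, x ≠ 0 ∧ x ∈ (LinearMap.ker (A : En →ₗ[ℝ] Em))ᗮ ∧ c = ‖A x‖ / ‖x‖} := by
  refine ⟨0, fun c hc => ?_⟩
  obtain ⟨x, hx0, -, rfl⟩ := hc
  positivity

lemma sigma_nonneg (A : En →L[ℝ] Em) (hA : A ≠ 0) :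
    0 ≤ sInf {c : ℝ | ∃ x : En, x ≠ 0 ∧ x ∈ (LinearMap.ker (A : En →ₗ[ℝ] Em))ᗮ ∧ c = ‖A x‖ / ‖x‖} := by
  apply le_csInf (sigma_set_nonempty A hA)
  rintro c ⟨x, hx0, -, rfl⟩
  positivity

lemma sigma_le_norm (A : En →L[ℝ] Em) (hA : A ≠ 0) :
    sInf {c : ℝ | ∃ x : En, x ≠ 0 ∧ x ∈ (LinearMap.ker (A : En →ₗ[ℝ] Em))ᗮ ∧ c = ‖A x‖ / ‖x‖} ≤ ‖A‖ := by
  obtain ⟨c, x, hx0, hx, rfl⟩ := sigma_set_nonempty A hA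
  refine le_trans (csInf_le (sigma_bddBelow A) ⟨x, hx0, hx, rfl⟩) ?_
  rw [div_le_iff₀ (norm_pos_iff.mpr hx0)]
  exact A.le_opNorm x

lemma dist_lower_bound (A : En →L[ℝ] Em) (hA : A ≠ 0) (u : Em) (y0 : En) (hy0 : A y0 = u)
    (x : En) :
    sInf {c : ℝ | ∃ x : En, x ≠ 0 ∧ x ∈ (LinearMap.ker (A : En →ₗ[ℝ] Em))ᗮ ∧ c = ‖A x‖ / ‖x‖} *
      Metric.infDist x {z : En | A z = u} ≤ ‖A x - u‖ := by
  set σ := sInf {c : ℝ | ∃ x : En, x ≠ 0 ∧ x ∈ (LinearMap.ker (A : En →ₗ[ℝ] Em))ᗮ ∧ c = ‖A x‖ / ‖x‖} with hσ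
  have hσ0 : 0 ≤ σ := sigma_nonneg A hA
  have hclosed : IsClosed {z : En | A z = u} := isClosed_eq A.continuous continuous_const
  obtain ⟨y, hyX, hdist⟩ := hclosed.exists_infDist_eq_dist ⟨y0, hy0⟩ x
  obtain ⟨z₁, hz₁, z₂, hz₂, hzdec⟩ := (LinearMap.ker (A : En →ₗ[ℝ] Em)).exists_add_mem_mem_orthogonal (x - y)
  have hAz : A x - u = A z₂ := by
    have h1 : A (x - y) = A x - u := by rw [map_sub, hyX]
    have h2 : A (x - y) = A z₂ := by
      rw [hzdec, map_add, (id (LinearMap.mem_ker.mp hz₁) : A z₁ = 0), zero_add]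
    rw [← h1, h2]
  have hmem : y + z₁ ∈ {z : En | A z = u} := by
    simp only [Set.mem_setOf_eq, map_add, (id (LinearMap.mem_ker.mp hz₁) : A z₁ = 0), add_zero]
    exact hyX
  have hle : Metric.infDist x {z : En | A z = u} ≤ ‖z₂‖ := by
    have := Metric.infDist_le_dist_of_mem (x := x) hmem
    have hxy : x - (y + z₁) = z₂ := by
      rw [← sub_sub, hzdec]; abel
    rwa [dist_eq_norm, hxy] at this
  rw [hAz]
  rcases eq_or_ne z₂ 0 with h | h
  · have : Metric.infDist x {z : En | A z = u} = 0 := by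
      have h1 : (0:ℝ) ≤ Metric.infDist x {z : En | A z = u} := Metric.infDist_nonneg
      have h2 := hle
      rw [h, norm_zero] at h2
      linarith
    rw [this, mul_zero, h, map_zero, norm_zero]
  · have hσle : σ ≤ ‖A z₂‖ / ‖z₂‖ := csInf_le (sigma_bddBelow A) ⟨z₂, h, hz₂, rfl⟩
    calc σ * Metric.infDist x {z : En | A z = u} ≤ σ * ‖z₂‖ :=
          mul_le_mul_of_nonneg_left (hle.trans (le_refl _)) hσ0
      _ ≤ (‖A z₂‖ / ‖z₂‖) * ‖z₂‖ := mul_le_mul_of_nonneg_right hσle (norm_nonneg _)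
      _ = ‖A z₂‖ := div_mul_cancel₀ _ (norm_ne_zero_iff.mpr h)

lemma dist_upper_bound (A : En →L[ℝ] Em) (u : Em) (y0 : En) (hy0 : A y0 = u) (x : En) :
    ‖A x - u‖ ≤ ‖A‖ * Metric.infDist x {z : En | A z = u} := by
  have hclosed : IsClosed {z : En | A z = u} := isClosed_eq A.continuous continuous_const
  obtain ⟨y, hyX, hdist⟩ := hclosed.exists_infDist_eq_dist ⟨y0, hy0⟩ x
  rw [hdist, dist_eq_norm]
  calc ‖A x - u‖ = ‖A (x - y)‖ := by rw [map_sub, hyX]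
    _ ≤ ‖A‖ * ‖x - y‖ := A.le_opNorm _




private lemma sq_le_sq_imp {a b : ℝ} (ha : 0 ≤ a) (hb : 0 ≤ b) (h : a ^ 2 ≤ b ^ 2) :
    a ≤ b := by nlinarith

lemma contraction_step {f : En → ℝ} (hc : ConvexOn ℝ Set.univ f) (hd : Differentiable ℝ f)
    {L : ℝ} (hL : 0 < L) (hLip : ∀ u v : En, ‖gradient f u - gradient f v‖ ≤ L * ‖u - v‖)
    {X : Set En} (hXc : IsClosed X) (hXne : X.Nonempty)
    (hg0 : ∀ y ∈ X, gradient f y = 0) {fs : ℝ} (hfs : ∀ z ∈ X, f z = fs)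
    {μ : ℝ} (hμ : 0 < μ) (hQG : ∀ z : En, μ / 2 * Metric.infDist z X ^ 2 ≤ f z - fs)
    {ε ν α : ℝ} (hε : 0 ≤ ε) (hν : 0 ≤ ν) (hα : 0 < α)
    (hstep : α * L * (1 + ν) ^ 2 < 1)
    {ℓ : ℝ} (hℓpos : 0 < ℓ)
    (hℓsq : ℓ ^ 2 = 1 - μ * α * (1 - α * L * (1 + ν) ^ 2) + 2 * ν * α * L)
    (x e : En) (herr : ‖e‖ ≤ ε + ν * ‖gradient f x‖) :
    Metric.infDist (x - α • (gradient f x + e)) X ≤ ℓ * Metric.infDist x X + α * ε := by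
  obtain ⟨y, hyX, hdist⟩ := hXc.exists_infDist_eq_dist hXne x
  set d := Metric.infDist x X with hdd
  set g := gradient f x with hg
  have hd0 : 0 ≤ d := Metric.infDist_nonneg
  have hdxy : ‖x - y‖ = d := by rw [hdist, dist_eq_norm]
  have hgy : gradient f y = 0 := hg0 y hyX
  set N := ‖x - y - α • g‖ with hN
  have hN0 : 0 ≤ N := norm_nonneg _
  have h2 : f x - fs ≤ ⟪g, x - y⟫ := by
    have h := convex_grad_ineq hc hd x y
    have hi : ⟪g, y - x⟫ = -⟪g, x - y⟫ := by
      rw [← inner_neg_right]; congr 1; abel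
    rw [hfs y hyX, hi] at h
    linarith
  have h3 : μ / 2 * d ^ 2 ≤ f x - fs := hQG x
  have h4 : ‖g‖ ^ 2 / L ≤ ⟪g, x - y⟫ := cocoercive_at_min hc hd hL hLip x y hgy
  have hI0 : 0 ≤ ⟪g, x - y⟫ := le_trans (by positivity) h4
  have h4' : ‖g‖ ^ 2 ≤ ⟪g, x - y⟫ * L := (div_le_iff₀ hL).mp h4
  have h5 : ‖g‖ ≤ L * d := by
    have h := hLip x y
    rwa [hgy, sub_zero, hdxy] at h
  have hN2 : N ^ 2 = d ^ 2 - 2 * α * ⟪g, x - y⟫ + α ^ 2 * ‖g‖ ^ 2 := by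
    rw [hN, @norm_sub_sq_real, real_inner_smul_right, norm_smul, Real.norm_eq_abs,
      abs_of_pos hα, hdxy, real_inner_comm]
    ring
  have hαL : α * L < 1 := by
    have p1 : 0 ≤ α * L * (ν * ν) := by positivity
    have p2 : 0 ≤ α * L * ν := by positivity
    nlinarith [hstep]
  have hNled : N ≤ d := by
    apply sq_le_sq_imp hN0 hd0
    have k1 : α ^ 2 * ‖g‖ ^ 2 ≤ α ^ 2 * (⟪g, x - y⟫ * L) :=
      mul_le_mul_of_nonneg_left h4' (sq_nonneg α)
    have k2 : α ^ 2 * (⟪g, x - y⟫ * L) = (α * L) * (α * ⟪g, x - y⟫) := by ring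
    have k3 : (α * L) * (α * ⟪g, x - y⟫) ≤ 1 * (α * ⟪g, x - y⟫) :=
      mul_le_mul_of_nonneg_right hαL.le (mul_nonneg hα.le hI0)
    have k4 : 0 ≤ α * ⟪g, x - y⟫ := mul_nonneg hα.le hI0
    rw [hN2]
    linarith
  have hsdef : ∃ s : ℝ, s = 1 - α * L * (1 + ν) ^ 2 := ⟨_, rfl⟩
  obtain ⟨s, hs⟩ := hsdef
  have hs0 : 0 < s := by rw [hs]; linarith
  have hs1 : 1 - s = α * L * (1 + ν) ^ 2 := by rw [hs]; ring
  have hℓ2 : ℓ ^ 2 = 1 - μ * α * s + 2 * ν * α * L := by rw [hs]; linear_combination hℓsq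
  have hIlb : s * (μ / 2 * d ^ 2) + (1 - s) * (‖g‖ ^ 2 / L) ≤ ⟪g, x - y⟫ := by
    have e1 : s * (μ / 2 * d ^ 2) ≤ s * ⟪g, x - y⟫ :=
      mul_le_mul_of_nonneg_left (h3.trans h2) hs0.le
    have hs2 : 0 ≤ 1 - s := by
      rw [hs1]; positivity
    have e2 : (1 - s) * (‖g‖ ^ 2 / L) ≤ (1 - s) * ⟪g, x - y⟫ :=
      mul_le_mul_of_nonneg_left h4 hs2
    have e3 : s * ⟪g, x - y⟫ + (1 - s) * ⟪g, x - y⟫ = ⟪g, x - y⟫ := by ring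
    linarith
  have hcross : N * ‖g‖ ≤ d * (L * d) := mul_le_mul hNled h5 (norm_nonneg _) hd0
  have t1 : 2 * α * (s * (μ / 2 * d ^ 2) + (1 - s) * (‖g‖ ^ 2 / L)) ≤ 2 * α * ⟪g, x - y⟫ :=
    mul_le_mul_of_nonneg_left hIlb (by positivity)
  have t2 : 2 * (α * ν) * (N * ‖g‖) ≤ 2 * (α * ν) * (d * (L * d)) :=
    mul_le_mul_of_nonneg_left hcross (by positivity)
  have hGL2 : 2 * α * ((1 - s) * (‖g‖ ^ 2 / L)) = 2 * α ^ 2 * (1 + ν) ^ 2 * ‖g‖ ^ 2 := by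
    rw [hs1]; field_simp
  have hℓ2d : ℓ ^ 2 * d ^ 2 = (1 - μ * α * s + 2 * ν * α * L) * d ^ 2 := by rw [hℓ2]
  have tnn : 0 ≤ α ^ 2 * ‖g‖ ^ 2 * (1 + 4 * ν + ν ^ 2) := by positivity
  have t1' : α * μ * s * d ^ 2 + 2 * α ^ 2 * (1 + ν) ^ 2 * ‖g‖ ^ 2 ≤ 2 * α * ⟪g, x - y⟫ := by
    calc α * μ * s * d ^ 2 + 2 * α ^ 2 * (1 + ν) ^ 2 * ‖g‖ ^ 2
        = 2 * α * (s * (μ / 2 * d ^ 2)) + 2 * α * ((1 - s) * (‖g‖ ^ 2 / L)) := by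
          rw [hGL2]; ring
      _ = 2 * α * (s * (μ / 2 * d ^ 2) + (1 - s) * (‖g‖ ^ 2 / L)) := by ring
      _ ≤ 2 * α * ⟪g, x - y⟫ := t1
  have t2' : 2 * (α * ν) * (N * ‖g‖) ≤ 2 * ν * α * L * d ^ 2 := by
    calc 2 * (α * ν) * (N * ‖g‖) ≤ 2 * (α * ν) * (d * (L * d)) := t2
      _ = 2 * ν * α * L * d ^ 2 := by ring
  have hT : (N + α * ν * ‖g‖) ^ 2 ≤ (ℓ * d) ^ 2 := by
    have texp : (N + α * ν * ‖g‖) ^ 2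
        = N ^ 2 + 2 * (α * ν) * (N * ‖g‖) + α ^ 2 * ν ^ 2 * ‖g‖ ^ 2 := by ring
    have hld : (ℓ * d) ^ 2 = ℓ ^ 2 * d ^ 2 := by ring
    rw [texp, hld, hℓ2d, hN2]
    linarith [t1', t2', tnn]
  have hfinal1 : N + α * ν * ‖g‖ ≤ ℓ * d :=
    sq_le_sq_imp (by positivity) (by positivity) hT
  have harr : x - α • (g + e) - y = (x - y - α • g) - α • e := by
    rw [smul_add]; abel
  calc Metric.infDist (x - α • (g + e)) X ≤ dist (x - α • (g + e)) y :=
        Metric.infDist_le_dist_of_mem hyX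
    _ = ‖(x - y - α • g) - α • e‖ := by rw [dist_eq_norm, harr]
    _ ≤ N + ‖α • e‖ := norm_sub_le _ _
    _ = N + α * ‖e‖ := by rw [norm_smul, Real.norm_eq_abs, abs_of_pos hα]
    _ ≤ N + α * (ε + ν * ‖g‖) := by
        have := mul_le_mul_of_nonneg_left herr hα.le
        linarith
    _ = (N + α * ν * ‖g‖) + α * ε := by ring
    _ ≤ ℓ * d + α * ε := by linarith

end Geo

/-- Cumulative distance bound (Lemma 1 eq. (13), deterministic errors):
`Σ_{k=1}^K dist(x_k, X_k*) ≤ (‖x_1 − x_1*‖ + W_K + ζ E_K) / (χ − ℓ)`. -/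
theorem cumulative_distance_bound_inexact_ogd {n m : ℕ} (K : ℕ)
    (A : EuclideanSpace ℝ (Fin n) →L[ℝ] EuclideanSpace ℝ (Fin m)) (hA : A ≠ 0)
    (σmin σmax χ : ℝ)
    (hσmin : σmin = sInf {c : ℝ | ∃ x : EuclideanSpace ℝ (Fin n),
      x ≠ 0 ∧ x ∈ (LinearMap.ker (A : EuclideanSpace ℝ (Fin n) →ₗ[ℝ] EuclideanSpace ℝ (Fin m)))ᗮ ∧ c = ‖A x‖ / ‖x‖})
    (hσmax : σmax = ‖A‖) (hχ : χ = σmin / σmax)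
    (f : ℕ → EuclideanSpace ℝ (Fin n) → ℝ)
    (hconv : ∀ k, ConvexOn ℝ Set.univ (f k)) (hdiff : ∀ k, Differentiable ℝ (f k))
    (L : ℝ) (hL : 0 < L)
    (hLip : ∀ k, ∀ u v : EuclideanSpace ℝ (Fin n),
      ‖gradient (f k) u - gradient (f k) v‖ ≤ L * ‖u - v‖)
    (ustar : ℕ → EuclideanSpace ℝ (Fin m)) (hrange : ∀ k, ustar k ∈ Set.range A)
    (Xstar : ℕ → Set (EuclideanSpace ℝ (Fin n)))
    (hXstar : ∀ k, Xstar k = {x | A x = ustar k})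
    (hXmin : ∀ k, Xstar k = {x | ∀ y : EuclideanSpace ℝ (Fin n), f k x ≤ f k y})
    (hgrad0 : ∀ k, ∀ y ∈ Xstar k, gradient (f k) y = 0)
    (fstar : ℕ → ℝ) (hfstar : ∀ k, ∀ x ∈ Xstar k, f k x = fstar k)
    (μ : ℝ) (hμ : 0 < μ)
    (hQG : ∀ k, ∀ x : EuclideanSpace ℝ (Fin n),
      μ / 2 * Metric.infDist x (Xstar k) ^ 2 ≤ f k x - fstar k)
    (ε : ℕ → ℝ) (hε : ∀ k, 0 ≤ ε k) (ν α : ℝ) (hν : 0 ≤ ν) (hα : 0 < α)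
    (hstep : α * L * (1 + ν) ^ 2 < 1)
    (ℓ ζ : ℝ) (hℓpos : 0 < ℓ)
    (hℓsq : ℓ ^ 2 = 1 - μ * α * (1 - α * L * (1 + ν) ^ 2) + 2 * ν * α * L)
    (hℓχ : ℓ < χ) (hζ : ζ = α * (1 + α * L) / ℓ)
    (x e : ℕ → EuclideanSpace ℝ (Fin n))
    (hrec : ∀ k, 1 ≤ k → k ≤ K →
      x (k + 1) = x k - α • (gradient (f k) (x k) + e k))
    (herr : ∀ k, 1 ≤ k → k ≤ K → ‖e k‖ ≤ ε k + ν * ‖gradient (f k) (x k)‖)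
    (xstar : ℕ → EuclideanSpace ℝ (Fin n)) (hxstar : ∀ k, xstar k ∈ Xstar k)
    (W E : ℝ)
    (hW : W = ∑ k ∈ Finset.Icc 2 K, ‖xstar k - xstar (k - 1)‖)
    (hE : E = ∑ k ∈ Finset.Icc 1 K, ε k) :
    ∑ k ∈ Finset.Icc 1 K, Metric.infDist (x k) (Xstar k) ≤
      (‖x 1 - xstar 1‖ + W + ζ * E) / (χ - ℓ) := by
  have hAnorm : 0 < ‖A‖ := norm_pos_iff.mpr hA
  have hσmin0 : 0 ≤ σmin := hσmin ▸ sigma_nonneg A hA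
  have hσle : σmin ≤ ‖A‖ := hσmin ▸ sigma_le_norm A hA
  have hχ1 : χ ≤ 1 := by
    rw [hχ, hσmax]
    exact div_le_one_of_le₀ hσle hAnorm.le
  have hχℓ : 0 < χ - ℓ := by linarith
  have hζℓ : ζ * ℓ = α * (1 + α * L) := by
    rw [hζ]; field_simp
  have hζ0 : 0 ≤ ζ := by
    rw [hζ]
    positivity
  have hAxstar : ∀ k, A (xstar k) = ustar k := fun k => by
    have := hxstar k
    rw [hXstar k] at this
    exact this
  set d : ℕ → ℝ := fun k => Metric.infDist (x k) (Xstar k) with hd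
  have hd0 : ∀ k, 0 ≤ d k := fun k => Metric.infDist_nonneg
  -- key per-step inequality
  have hkey : ∀ k, 1 ≤ k → k + 1 ≤ K →
      χ * d (k + 1) ≤ ℓ * d k + ‖xstar (k + 1) - xstar k‖ + ζ * ℓ * ε k := by
    intro k hk1 hkK
    have hkK' : k ≤ K := by omega
    -- contraction in Xstar k
    have hcontr : Metric.infDist (x (k + 1)) (Xstar k) ≤ ℓ * d k + α * ε k := by
      rw [hrec k hk1 hkK']
      exact contraction_step (hconv k) (hdiff k) hL (hLip k)
        (by rw [hXstar k]; exact isClosed_eq A.continuous continuous_const)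
        ⟨xstar k, hxstar k⟩ (hgrad0 k) (hfstar k) hμ (hQG k) (hε k) hν hα hstep hℓpos hℓsq
        (x k) (e k) (herr k hk1 hkK')
    have hlow : σmin * d (k + 1) ≤ ‖A (x (k + 1)) - ustar (k + 1)‖ := by
      have := dist_lower_bound A hA (ustar (k + 1)) (xstar (k + 1)) (hAxstar (k + 1)) (x (k + 1))
      rw [← hσmin] at this
      have hset : {z : EuclideanSpace ℝ (Fin n) | A z = ustar (k + 1)} = Xstar (k + 1) :=
        (hXstar (k + 1)).symm
      rwa [hset] at this
    have htri : ‖A (x (k + 1)) - ustar (k + 1)‖ ≤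
        ‖A (x (k + 1)) - ustar k‖ + ‖A‖ * ‖xstar (k + 1) - xstar k‖ := by
      have h1 : A (x (k + 1)) - ustar (k + 1)
          = (A (x (k + 1)) - ustar k) - (ustar (k + 1) - ustar k) := by abel
      have h2 : ‖ustar (k + 1) - ustar k‖ ≤ ‖A‖ * ‖xstar (k + 1) - xstar k‖ := by
        rw [← hAxstar (k + 1), ← hAxstar k, ← map_sub]
        exact A.le_opNorm _
      calc ‖A (x (k + 1)) - ustar (k + 1)‖
          ≤ ‖A (x (k + 1)) - ustar k‖ + ‖ustar (k + 1) - ustar k‖ := by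
            rw [h1]; exact norm_sub_le _ _
        _ ≤ _ := by linarith
    have hup : ‖A (x (k + 1)) - ustar k‖ ≤ ‖A‖ * (ℓ * d k + α * ε k) := by
      have h1 := dist_upper_bound A (ustar k) (xstar k) (hAxstar k) (x (k + 1))
      have hset : {z : EuclideanSpace ℝ (Fin n) | A z = ustar k} = Xstar k :=
        (hXstar k).symm
      rw [hset] at h1
      exact h1.trans (mul_le_mul_of_nonneg_left hcontr hAnorm.le)
    have hαζ : α * ε k ≤ ζ * ℓ * ε k := by
      rw [hζℓ]
      have : α ≤ α * (1 + α * L) := by nlinarith [mul_nonneg (mul_nonneg hα.le hα.le) hL.le]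
      exact mul_le_mul_of_nonneg_right this (hε k)
    have hdiv : χ * d (k + 1) ≤ ℓ * d k + α * ε k + ‖xstar (k + 1) - xstar k‖ := by
      rw [hχ, hσmax]
      rw [div_mul_eq_mul_div, div_le_iff₀ hAnorm]
      calc σmin * d (k + 1) ≤ ‖A (x (k + 1)) - ustar (k + 1)‖ := hlow
        _ ≤ ‖A‖ * (ℓ * d k + α * ε k) + ‖A‖ * ‖xstar (k + 1) - xstar k‖ := by
            have := htri; linarith
        _ = (ℓ * d k + α * ε k + ‖xstar (k + 1) - xstar k‖) * ‖A‖ := by ring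
    linarith
  -- induction claim
  have claim : ∀ j, 1 ≤ j → j ≤ K →
      χ * (∑ k ∈ Finset.Icc 1 j, d k) + ℓ * d j + ζ * ℓ * ε j ≤
        χ * d 1 + ℓ * (∑ k ∈ Finset.Icc 1 j, d k) +
          (∑ k ∈ Finset.Icc 2 j, ‖xstar k - xstar (k - 1)‖) +
          ζ * ℓ * (∑ k ∈ Finset.Icc 1 j, ε k) := by
    intro j hj
    induction j, hj using Nat.le_induction with
    | base =>
      intro _
      simp
    | succ j hj ih =>
      intro hjK
      have ihj := ih (by omega)
      have hkeyj := hkey j hj hjK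
      have hsd : ∑ k ∈ Finset.Icc 1 (j + 1), d k
          = (∑ k ∈ Finset.Icc 1 j, d k) + d (j + 1) :=
        Finset.sum_Icc_succ_top (by omega) _
      have hse : ∑ k ∈ Finset.Icc 1 (j + 1), ε k
          = (∑ k ∈ Finset.Icc 1 j, ε k) + ε (j + 1) :=
        Finset.sum_Icc_succ_top (by omega) _
      have hsw : ∑ k ∈ Finset.Icc 2 (j + 1), ‖xstar k - xstar (k - 1)‖
          = (∑ k ∈ Finset.Icc 2 j, ‖xstar k - xstar (k - 1)‖)
            + ‖xstar (j + 1) - xstar j‖ := by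
        have := Finset.sum_Icc_succ_top (a := 2) (b := j)
          (f := fun k => ‖xstar k - xstar (k - 1)‖) (by omega)
        simpa using this
      rw [hsd, hse, hsw]
      have hexp : χ * ((∑ k ∈ Finset.Icc 1 j, d k) + d (j + 1))
          = χ * (∑ k ∈ Finset.Icc 1 j, d k) + χ * d (j + 1) := by ring
      nlinarith [hkeyj, ihj]
  -- conclude
  rcases Nat.eq_zero_or_pos K with hK0 | hK1
  · subst hK0
    simp only [Finset.Icc_eq_empty_of_lt (by norm_num : (1:ℕ) > 0), Finset.sum_empty]
    have hWE : W = 0 ∧ E = 0 := by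
      constructor
      · rw [hW]; simp
      · rw [hE]; simp
    obtain ⟨hW0, hE0⟩ := hWE
    rw [hW0, hE0]
    positivity
  · have hc := claim K hK1 (le_refl K)
    have hd1 : d 1 ≤ ‖x 1 - xstar 1‖ := by
      have := Metric.infDist_le_dist_of_mem (x := x 1) (hxstar 1)
      rwa [dist_eq_norm] at this
    have hE0 : 0 ≤ E := by
      rw [hE]
      exact Finset.sum_nonneg fun k _ => hε k
    have hℓ1 : ℓ ≤ 1 := by linarith
    have hχ0 : 0 < χ := by linarith
    have hχd1 : χ * d 1 ≤ ‖x 1 - xstar 1‖ := by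
      calc χ * d 1 ≤ 1 * d 1 := mul_le_mul_of_nonneg_right hχ1 (hd0 1)
        _ = d 1 := one_mul _
        _ ≤ ‖x 1 - xstar 1‖ := hd1
    have hζℓE : ζ * ℓ * E ≤ ζ * E := by
      have : ζ * ℓ ≤ ζ := by nlinarith
      exact mul_le_mul_of_nonneg_right this hE0
    have hmain : (χ - ℓ) * (∑ k ∈ Finset.Icc 1 K, d k) ≤ ‖x 1 - xstar 1‖ + W + ζ * E := by
      have h1 : 0 ≤ ℓ * d K := mul_nonneg hℓpos.le (hd0 K)
      have h2 : 0 ≤ ζ * ℓ * ε K := mul_nonneg (mul_nonneg hζ0 hℓpos.le) (hε K)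
      have hWdef : (∑ k ∈ Finset.Icc 2 K, ‖xstar k - xstar (k - 1)‖) = W := hW.symm
      have hEdef : (∑ k ∈ Finset.Icc 1 K, ε k) = E := hE.symm
      rw [hWdef, hEdef] at hc
      nlinarith [hc, hχd1, hζℓE]
    rw [le_div_iff₀ hχℓ]
    calc (∑ k ∈ Finset.Icc 1 K, Metric.infDist (x k) (Xstar k)) * (χ - ℓ)
        = (χ - ℓ) * (∑ k ∈ Finset.Icc 1 K, d k) := by rw [mul_comm]
      _ ≤ ‖x 1 - xstar 1‖ + W + ζ * E := hmain
end

section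
/- (Proximal online gradient descent as inexact gradient descent.) Let g, h : ℝⁿ → ℝ be differentiable with ∇h being L-Lipschitz, and let α > 0 satisfy αL < 1. Suppose x, x⁺ ∈ ℝⁿ satisfy the proximal fixed-point relation x⁺ = x − α∇g(x) − α∇h(x⁺). Then the equivalent gradient error e := ∇h(x⁺) − ∇h(x) (so that x⁺ = x − α(∇g(x) + ∇h(x) + e)) satisfies ‖e‖ ≤ (αL/(1 − αL)) · ‖∇g(x) + ∇h(x)‖. -/
/-- Proximal online gradient descent as inexact gradient descent:
if `x⁺ = x − α∇g(x) − α∇h(x⁺)` then the equivalent gradient error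
`e := ∇h(x⁺) − ∇h(x)` satisfies `‖e‖ ≤ (αL/(1 − αL))‖∇g(x) + ∇h(x)‖`. -/
theorem proximal_ogd_error_bound {n : ℕ}
    (g h : EuclideanSpace ℝ (Fin n) → ℝ)
    (hg : Differentiable ℝ g) (hh : Differentiable ℝ h)
    (L : ℝ) (hL : 0 < L)
    (hLip : ∀ u v : EuclideanSpace ℝ (Fin n),
      ‖gradient h u - gradient h v‖ ≤ L * ‖u - v‖)
    (α : ℝ) (hα : 0 < α) (hαL : α * L < 1)
    (x xp : EuclideanSpace ℝ (Fin n))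
    (hprox : xp = x - α • gradient g x - α • gradient h xp)
    (e : EuclideanSpace ℝ (Fin n)) (he : e = gradient h xp - gradient h x) :
    ‖e‖ ≤ α * L / (1 - α * L) * ‖gradient g x + gradient h x‖ := by
  have hdiff : xp - x = -(α • (gradient g x + gradient h x + e)) := by
    rw [he]; nth_rewrite 1 [hprox]; module
  have h1 : ‖e‖ ≤ L * ‖xp - x‖ := he ▸ hLip xp x
  have h2 : ‖xp - x‖ = α * ‖gradient g x + gradient h x + e‖ := by
    rw [hdiff, norm_neg, norm_smul, Real.norm_eq_abs, abs_of_pos hα]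
  have h3 : ‖gradient g x + gradient h x + e‖ ≤ ‖gradient g x + gradient h x‖ + ‖e‖ :=
    norm_add_le _ _
  have key : (1 - α * L) * ‖e‖ ≤ α * L * ‖gradient g x + gradient h x‖ := by
    nlinarith [norm_nonneg e, mul_le_mul_of_nonneg_left h3 (by positivity : (0:ℝ) ≤ α * L)]
  rw [div_mul_eq_mul_div, le_div_iff₀ (by linarith)]
  linarith [key]
end
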